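/- Let δ > 0, γ ≥ 0, γ' > 1/δ, and μ > 0 with δ(γ + γ') > 2 and (1+μ)(γ + γ') < 1. For n > 1 set I_μ(n) = ∫_{n^{−1−μ}}^1 ∫_{n^{−1−μ}}^1 min(1, (min(s,t))^{−γδ} (max(s,t))^{−γ'δ} n^{−δ}) ds dt. Then lim_{n→∞} (−log I_μ(n) / log n) = δ − (1+μ)(δ(γ + γ') − 2). -/

import Mathlib

open Filter MeasureTheory Set

open MeasureTheory Set

lemma Tbound {p a : ℝ} (hp : 1 < p) (ha : 0 < a) (ha1 : a ≤ 1) :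
    ∫ t in Set.Icc a 1, t ^ (-p) ≤ a ^ (1 - p) / (p - 1) := by
  have h0 : (0:ℝ) ∉ Set.uIcc a 1 := by
    rw [Set.uIcc_of_le ha1]; intro h; exact absurd h.1 (not_le.mpr ha)
  have hcalc : ∫ t in Set.Icc a 1, t ^ (-p) = (1 - a ^ (-p + 1)) / (-p + 1) := by
    rw [MeasureTheory.integral_Icc_eq_integral_Ioc,
      ← intervalIntegral.integral_of_le ha1,
      integral_rpow (Or.inr ⟨by intro h; linarith [neg_eq_iff_eq_neg.mp h], h0⟩),
      Real.one_rpow]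
  rw [hcalc]
  have he : -p + 1 = 1 - p := by ring
  rw [he]
  have hp1 : 0 < p - 1 := by linarith
  have heq : (1 - a ^ (1 - p)) / (1 - p) = (a ^ (1 - p) - 1) / (p - 1) := by
    rw [div_eq_div_iff (by intro h; apply hp.ne; linarith) hp1.ne']; ring
  rw [heq]
  gcongr
  linarith

lemma ptwise_aux {α β s t : ℝ} (hs : 0 < s) (ht : 0 < t) (hst : s ≤ t) (hαβ : α ≤ β) :
    s ^ (-α) * t ^ (-β) ≤ s ^ (-((α+β)/2)) * t ^ (-((α+β)/2)) := by
  set m := (α+β)/2 with hm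
  set c := m - α with hc
  have hc0 : 0 ≤ c := by rw [hc, hm]; linarith
  have h1 : s ^ (-α) = s ^ (-m) * s ^ c := by
    rw [← Real.rpow_add hs]; congr 1; rw [hc]; ring
  have h2 : t ^ (-β) = t ^ (-m) * t ^ (-c) := by
    rw [← Real.rpow_add ht]; congr 1; rw [hc, hm]; ring
  rw [h1, h2]
  have h3 : s ^ c * t ^ (-c) ≤ 1 := by
    have hle : s ^ c ≤ t ^ c := Real.rpow_le_rpow hs.le hst hc0
    calc s ^ c * t ^ (-c) ≤ t ^ c * t ^ (-c) := by
          apply mul_le_mul_of_nonneg_right hle (Real.rpow_nonneg ht.le _)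
      _ = 1 := by rw [← Real.rpow_add ht]; simp
  calc s ^ (-m) * s ^ c * (t ^ (-m) * t ^ (-c))
      = (s ^ (-m) * t ^ (-m)) * (s ^ c * t ^ (-c)) := by ring
    _ ≤ (s ^ (-m) * t ^ (-m)) * 1 := by
        apply mul_le_mul_of_nonneg_left h3
        positivity
    _ = s ^ (-m) * t ^ (-m) := by ring

lemma ptwise1 {α β s t : ℝ} (hs : 0 < s) (ht : 0 < t) (hαβ : α ≤ β) :
    (min s t) ^ (-α) * (max s t) ^ (-β) ≤ s ^ (-((α+β)/2)) * t ^ (-((α+β)/2)) := by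
  rcases le_total s t with h | h
  · rw [min_eq_left h, max_eq_right h]; exact ptwise_aux hs ht h hαβ
  · rw [min_eq_right h, max_eq_left h, mul_comm (s ^ (-((α+β)/2)))]
    exact ptwise_aux ht hs h hαβ

lemma exists_pq {α β : ℝ} (hα : 0 ≤ α) (hβ : 1 < β) (hσ : 2 < α + β) :
    ∃ p q : ℝ, 1 < p ∧ 1 < q ∧ p + q = α + β ∧
      ∀ s t : ℝ, 0 < s → 0 < t →
        (min s t) ^ (-α) * (max s t) ^ (-β) ≤ s ^ (-p) * t ^ (-q) + s ^ (-q) * t ^ (-p) := by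
  rcases le_or_gt α β with h | h
  · refine ⟨(α+β)/2, (α+β)/2, by linarith, by linarith, by ring, ?_⟩
    intro s t hs ht
    refine le_trans (ptwise1 hs ht h) ?_
    apply le_add_of_nonneg_right
    positivity
  · refine ⟨α, β, by linarith, hβ, rfl, ?_⟩
    intro s t hs ht
    rcases le_total s t with hst | hst
    · rw [min_eq_left hst, max_eq_right hst]
      apply le_add_of_nonneg_right
      positivity
    · rw [min_eq_right hst, max_eq_left hst]
      have he : t ^ (-α) * s ^ (-β) = s ^ (-β) * t ^ (-α) := mul_comm _ _
      rw [he]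
      apply le_add_of_nonneg_left
      positivity

lemma upper_est {α β p q n δ μ : ℝ} (hn : 1 < n) (hμ : 0 < μ)
    (hp : 1 < p) (hq : 1 < q) (hpq : p + q = α + β)
    (hpt : ∀ s t : ℝ, 0 < s → 0 < t →
      (min s t) ^ (-α) * (max s t) ^ (-β) ≤ s ^ (-p) * t ^ (-q) + s ^ (-q) * t ^ (-p)) :
    (∫ s in Set.Icc (n ^ (-1-μ)) 1, ∫ t in Set.Icc (n ^ (-1-μ)) 1,
        min 1 ((min s t) ^ (-α) * (max s t) ^ (-β) * n ^ (-δ)))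
      ≤ (2 / ((p-1)*(q-1))) * n ^ ((-1-μ)*(2-(α+β)) - δ) := by
  have hn0 : (0:ℝ) < n := lt_trans one_pos hn
  set a := n ^ (-1-μ) with ha
  have ha0 : 0 < a := Real.rpow_pos_of_pos hn0 _
  have ha1 : a ≤ 1 := Real.rpow_le_one_of_one_le_of_nonpos hn.le (by linarith)
  have hnd : 0 ≤ n ^ (-δ) := (Real.rpow_pos_of_pos hn0 _).le
  have hcont : ∀ r : ℝ, IntegrableOn (fun t : ℝ => t ^ r) (Set.Icc a 1) := by
    intro r
    apply ContinuousOn.integrableOn_Icc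
    apply ContinuousOn.rpow_const continuousOn_id
    intro t ht; exact Or.inl (ne_of_gt (lt_of_lt_of_le ha0 ht.1))
  set Tp := ∫ t in Set.Icc a 1, t ^ (-p) with hTp
  set Tq := ∫ t in Set.Icc a 1, t ^ (-q) with hTq
  have hTp0 : 0 ≤ Tp := setIntegral_nonneg measurableSet_Icc
    (fun t ht => Real.rpow_nonneg (le_trans ha0.le ht.1) _)
  have hTq0 : 0 ≤ Tq := setIntegral_nonneg measurableSet_Icc
    (fun t ht => Real.rpow_nonneg (le_trans ha0.le ht.1) _)
  have hf0 : ∀ s t : ℝ, 0 < s → 0 < t →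
      0 ≤ min 1 ((min s t) ^ (-α) * (max s t) ^ (-β) * n ^ (-δ)) := by
    intro s t hs ht
    have h1 : 0 < min s t := lt_min hs ht
    have h2 : 0 < max s t := lt_max_of_lt_left hs
    have : 0 ≤ (min s t) ^ (-α) * (max s t) ^ (-β) * n ^ (-δ) := by positivity
    exact le_min zero_le_one this
  have inner : ∀ s ∈ Set.Icc a 1,
      (∫ t in Set.Icc a 1, min 1 ((min s t) ^ (-α) * (max s t) ^ (-β) * n ^ (-δ)))
        ≤ (s ^ (-p) * Tq + s ^ (-q) * Tp) * n ^ (-δ) := by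
    intro s hs
    have hs0 : 0 < s := lt_of_lt_of_le ha0 hs.1
    have step : (∫ t in Set.Icc a 1, min 1 ((min s t) ^ (-α) * (max s t) ^ (-β) * n ^ (-δ)))
        ≤ ∫ t in Set.Icc a 1, (s ^ (-p) * t ^ (-q) + s ^ (-q) * t ^ (-p)) * n ^ (-δ) := by
      apply integral_mono_of_nonneg
      · filter_upwards [ae_restrict_mem measurableSet_Icc] with t ht
        exact hf0 s t hs0 (lt_of_lt_of_le ha0 ht.1)
      · exact (((hcont (-q)).const_mul _).add ((hcont (-p)).const_mul _)).mul_const _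
      · filter_upwards [ae_restrict_mem measurableSet_Icc] with t ht
        have ht0 : 0 < t := lt_of_lt_of_le ha0 ht.1
        exact le_trans (min_le_right _ _)
          (mul_le_mul_of_nonneg_right (hpt s t hs0 ht0) hnd)
    refine step.trans_eq ?_
    rw [integral_mul_const]
    congr 1
    rw [integral_add ((hcont (-q)).const_mul _) ((hcont (-p)).const_mul _),
      integral_const_mul, integral_const_mul]
  have outer : (∫ s in Set.Icc a 1, ∫ t in Set.Icc a 1,
      min 1 ((min s t) ^ (-α) * (max s t) ^ (-β) * n ^ (-δ)))
      ≤ ∫ s in Set.Icc a 1, (s ^ (-p) * Tq + s ^ (-q) * Tp) * n ^ (-δ) := by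
    apply integral_mono_of_nonneg
    · filter_upwards [ae_restrict_mem measurableSet_Icc] with s hs
      apply integral_nonneg_of_ae
      filter_upwards [ae_restrict_mem measurableSet_Icc] with t ht
      exact hf0 s t (lt_of_lt_of_le ha0 hs.1) (lt_of_lt_of_le ha0 ht.1)
    · exact (((hcont (-p)).mul_const _).add ((hcont (-q)).mul_const _)).mul_const _
    · filter_upwards [ae_restrict_mem measurableSet_Icc] with s hs
      exact inner s hs
  have houter2 : (∫ s in Set.Icc a 1, (s ^ (-p) * Tq + s ^ (-q) * Tp) * n ^ (-δ))
      = (Tp * Tq + Tq * Tp) * n ^ (-δ) := by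
    rw [integral_mul_const]
    congr 1
    rw [integral_add ((hcont (-p)).mul_const _) ((hcont (-q)).mul_const _),
      integral_mul_const, integral_mul_const]
  have hTpb := Tbound hp ha0 ha1
  have hTqb := Tbound hq ha0 ha1
  have hfin : (Tp * Tq + Tq * Tp) * n ^ (-δ)
      ≤ (2 / ((p-1)*(q-1))) * n ^ ((-1-μ)*(2-(α+β)) - δ) := by
    have h2 : Tp * Tq ≤ (a ^ (1-p) / (p-1)) * (a ^ (1-q) / (q-1)) := by
      apply mul_le_mul hTpb hTqb hTq0
      have hp1 : (0:ℝ) < p - 1 := by linarith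
      exact div_nonneg (Real.rpow_nonneg ha0.le _) hp1.le
    have key : a ^ (1-p) * a ^ (1-q) * n ^ (-δ) = n ^ ((-1-μ)*(2-(α+β)) - δ) := by
      rw [← Real.rpow_add ha0]
      have he1 : (1-p) + (1-q) = 2 - (α+β) := by linarith
      rw [he1, ha, ← Real.rpow_mul hn0.le, ← Real.rpow_add hn0]; ring_nf
    calc (Tp * Tq + Tq * Tp) * n ^ (-δ) = 2 * (Tp * Tq) * n ^ (-δ) := by ring
      _ ≤ 2 * ((a ^ (1-p) / (p-1)) * (a ^ (1-q) / (q-1))) * n ^ (-δ) := by gcongr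
      _ = (2 / ((p-1)*(q-1))) * (a ^ (1-p) * a ^ (1-q) * n ^ (-δ)) := by
          field_simp
      _ = (2 / ((p-1)*(q-1))) * n ^ ((-1-μ)*(2-(α+β)) - δ) := by rw [key]
  exact le_trans outer (houter2 ▸ hfin)

lemma lower_est {α β n δ μ : ℝ} (hn : 1 < n) (hμ : 0 < μ) (hα : 0 ≤ α) (hβ : 0 ≤ β)
    (h2a : 2 * n ^ (-1-μ) ≤ 1) (hexp : (1+μ)*(α+β) ≤ δ) :
    2 ^ (-(α+β)) * n ^ ((-1-μ)*(2-(α+β)) - δ)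
      ≤ ∫ s in Set.Icc (n ^ (-1-μ)) 1, ∫ t in Set.Icc (n ^ (-1-μ)) 1,
          min 1 ((min s t) ^ (-α) * (max s t) ^ (-β) * n ^ (-δ)) := by
  have hn0 : (0:ℝ) < n := lt_trans one_pos hn
  set a := n ^ (-1-μ) with ha
  have ha0 : 0 < a := Real.rpow_pos_of_pos hn0 _
  have h2a0 : 0 < 2 * a := by linarith
  have ha1 : a ≤ 1 := by linarith
  have hsub : Set.Icc a (2*a) ⊆ Set.Icc a 1 :=
    Set.Icc_subset_Icc le_rfl h2a
  set c0 := (2*a) ^ (-α) * (2*a) ^ (-β) * n ^ (-δ) with hc0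
  have hc0pos : 0 < c0 := by positivity
  -- c0 ≤ 1
  have hc01 : c0 ≤ 1 := by
    have e1 : (2*a) ^ (-α) ≤ a ^ (-α) :=
      Real.rpow_le_rpow_of_nonpos ha0 (by linarith) (neg_nonpos.mpr hα)
    have e2 : (2*a) ^ (-β) ≤ a ^ (-β) :=
      Real.rpow_le_rpow_of_nonpos ha0 (by linarith) (neg_nonpos.mpr hβ)
    have step : c0 ≤ a ^ (-α) * a ^ (-β) * n ^ (-δ) := by
      rw [hc0]
      exact mul_le_mul_of_nonneg_right
        (mul_le_mul e1 e2 (Real.rpow_nonneg h2a0.le _) (Real.rpow_nonneg ha0.le _))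
        (Real.rpow_nonneg hn0.le _)
    refine step.trans ?_
    have : a ^ (-α) * a ^ (-β) * n ^ (-δ) = n ^ ((1+μ)*(α+β) - δ) := by
      rw [← Real.rpow_add ha0, ha, ← Real.rpow_mul hn0.le, ← Real.rpow_add hn0]
      congr 1; ring
    rw [this]
    exact Real.rpow_le_one_of_one_le_of_nonpos hn.le (by linarith)
  -- pointwise lower bound on the small square
  have hptc : ∀ s ∈ Set.Icc a (2*a), ∀ t ∈ Set.Icc a (2*a),
      c0 ≤ min 1 ((min s t) ^ (-α) * (max s t) ^ (-β) * n ^ (-δ)) := by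
    intro s hs t ht
    have hs0 : 0 < s := lt_of_lt_of_le ha0 hs.1
    have ht0 : 0 < t := lt_of_lt_of_le ha0 ht.1
    have hmin0 : 0 < min s t := lt_min hs0 ht0
    have hmax0 : 0 < max s t := lt_max_of_lt_left hs0
    have hminle : min s t ≤ 2*a := le_trans (min_le_left _ _) hs.2
    have hmaxle : max s t ≤ 2*a := max_le hs.2 ht.2
    have hX : c0 ≤ (min s t) ^ (-α) * (max s t) ^ (-β) * n ^ (-δ) := by
      rw [hc0]
      exact mul_le_mul_of_nonneg_right
        (mul_le_mul (Real.rpow_le_rpow_of_nonpos hmin0 hminle (neg_nonpos.mpr hα))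
          (Real.rpow_le_rpow_of_nonpos hmax0 hmaxle (neg_nonpos.mpr hβ))
          (Real.rpow_nonneg h2a0.le _) (Real.rpow_nonneg hmin0.le _))
        (Real.rpow_nonneg hn0.le _)
    calc c0 = min 1 c0 := (min_eq_right hc01).symm
      _ ≤ min 1 ((min s t) ^ (-α) * (max s t) ^ (-β) * n ^ (-δ)) :=
          min_le_min (le_refl 1) hX
  -- nonnegativity of the integrand
  have hf0 : ∀ s t : ℝ, 0 < s → 0 < t →
      0 ≤ min 1 ((min s t) ^ (-α) * (max s t) ^ (-β) * n ^ (-δ)) := by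
    intro s t hs ht
    have h1 : 0 < min s t := lt_min hs ht
    have h2 : 0 < max s t := lt_max_of_lt_left hs
    have : 0 ≤ (min s t) ^ (-α) * (max s t) ^ (-β) * n ^ (-δ) := by positivity
    exact le_min zero_le_one this
  -- integrability of inner integrand for fixed positive s
  have hfsint : ∀ s : ℝ, 0 < s → ∀ b c : ℝ, a ≤ b →
      IntegrableOn (fun t => min 1 ((min s t) ^ (-α) * (max s t) ^ (-β) * n ^ (-δ)))
        (Set.Icc b c) := by
    intro s hs0 b c hab
    apply ContinuousOn.integrableOn_Icc
    have c1 : ContinuousOn (fun t : ℝ => (min s t) ^ (-α)) (Set.Icc b c) := by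
      apply ContinuousOn.rpow_const ((continuous_const.min continuous_id).continuousOn)
      intro t ht
      exact Or.inl (lt_min hs0 (lt_of_lt_of_le ha0 (le_trans hab ht.1))).ne'
    have c2 : ContinuousOn (fun t : ℝ => (max s t) ^ (-β)) (Set.Icc b c) := by
      apply ContinuousOn.rpow_const ((continuous_const.max continuous_id).continuousOn)
      intro t ht
      exact Or.inl (lt_max_of_lt_left hs0).ne'
    exact (continuous_const.min continuous_id).comp_continuousOn
      ((c1.mul c2).mul continuousOn_const)
  -- the inner integral as a function of s
  set g : ℝ → ℝ := fun s => ∫ t in Set.Icc a 1,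
      min 1 ((min s t) ^ (-α) * (max s t) ^ (-β) * n ^ (-δ)) with hg
  have hgnonneg : ∀ s : ℝ, 0 < s → 0 ≤ g s := by
    intro s hs0
    apply integral_nonneg_of_ae
    filter_upwards [ae_restrict_mem measurableSet_Icc] with t ht
    exact hf0 s t hs0 (lt_of_lt_of_le ha0 ht.1)
  -- measurability of g
  have hF : Measurable (fun x : ℝ × ℝ =>
      min 1 ((min x.1 x.2) ^ (-α) * (max x.1 x.2) ^ (-β) * n ^ (-δ))) := by fun_prop
  have hgm : StronglyMeasurable g :=
    hF.stronglyMeasurable.integral_prod_right' (ν := volume.restrict (Set.Icc a 1))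
  have hconst1 : IntegrableOn (fun _ : ℝ => (1:ℝ)) (Set.Icc a 1) :=
    integrableOn_const measure_Icc_lt_top.ne
  -- g is bounded by 1
  have hgle1 : ∀ s : ℝ, 0 < s → g s ≤ 1 := by
    intro s hs0
    have step : g s ≤ ∫ _ in Set.Icc a 1, (1:ℝ) := by
      apply integral_mono_of_nonneg
      · filter_upwards [ae_restrict_mem measurableSet_Icc] with t ht
        exact hf0 s t hs0 (lt_of_lt_of_le ha0 ht.1)
      · exact hconst1
      · filter_upwards with t
        exact min_le_left _ _
    refine step.trans ?_
    rw [setIntegral_const, smul_eq_mul, mul_one,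
      Real.volume_real_Icc_of_le (by linarith)]
    linarith
  have hgint : IntegrableOn g (Set.Icc a 1) := by
    apply Integrable.mono' hconst1 hgm.aestronglyMeasurable
    filter_upwards [ae_restrict_mem measurableSet_Icc] with s hs
    have hs0 : 0 < s := lt_of_lt_of_le ha0 hs.1
    rw [Real.norm_eq_abs, abs_of_nonneg (hgnonneg s hs0)]
    exact hgle1 s hs0
  -- inner lower bound
  have hinner : ∀ s ∈ Set.Icc a (2*a), a * c0 ≤ g s := by
    intro s hs
    have hs0 : 0 < s := lt_of_lt_of_le ha0 hs.1
    have step1 : (∫ t in Set.Icc a (2*a), (fun _ => c0) t)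
        ≤ ∫ t in Set.Icc a (2*a),
            min 1 ((min s t) ^ (-α) * (max s t) ^ (-β) * n ^ (-δ)) := by
      apply setIntegral_mono_on
      · exact integrableOn_const measure_Icc_lt_top.ne
      · exact hfsint s hs0 a (2*a) le_rfl
      · exact measurableSet_Icc
      · intro t ht; exact hptc s hs t ht
    have step2 : (∫ t in Set.Icc a (2*a),
          min 1 ((min s t) ^ (-α) * (max s t) ^ (-β) * n ^ (-δ))) ≤ g s := by
      apply setIntegral_mono_set
      · exact hfsint s hs0 a 1 le_rfl
      · filter_upwards [ae_restrict_mem measurableSet_Icc] with t ht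
        exact hf0 s t hs0 (lt_of_lt_of_le ha0 ht.1)
      · exact HasSubset.Subset.eventuallyLE hsub
    have hconstval : (∫ _ in Set.Icc a (2*a), c0) = a * c0 := by
      rw [setIntegral_const, smul_eq_mul,
        Real.volume_real_Icc_of_le (by linarith)]
      ring_nf
    calc a * c0 = ∫ _ in Set.Icc a (2*a), c0 := hconstval.symm
      _ ≤ _ := step1
      _ ≤ g s := step2
  -- outer lower bound
  have houter : a * (a * c0) ≤ ∫ s in Set.Icc a 1, g s := by
    have step1 : (∫ _ in Set.Icc a (2*a), a * c0) ≤ ∫ s in Set.Icc a (2*a), g s := by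
      apply setIntegral_mono_on
      · exact integrableOn_const measure_Icc_lt_top.ne
      · exact hgint.mono_set hsub
      · exact measurableSet_Icc
      · intro s hs; exact hinner s hs
    have step2 : (∫ s in Set.Icc a (2*a), g s) ≤ ∫ s in Set.Icc a 1, g s := by
      apply setIntegral_mono_set hgint
      · filter_upwards [ae_restrict_mem measurableSet_Icc] with s hs
        exact hgnonneg s (lt_of_lt_of_le ha0 hs.1)
      · exact HasSubset.Subset.eventuallyLE hsub
    have hconstval : (∫ _ in Set.Icc a (2*a), a * c0) = a * (a * c0) := by
      rw [setIntegral_const, smul_eq_mul,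
        Real.volume_real_Icc_of_le (by linarith)]
      ring_nf
    calc a * (a * c0) = ∫ _ in Set.Icc a (2*a), a * c0 := hconstval.symm
      _ ≤ _ := step1
      _ ≤ _ := step2
  -- final algebra
  have halg : a * (a * c0) = 2 ^ (-(α+β)) * n ^ ((-1-μ)*(2-(α+β)) - δ) := by
    rw [hc0, Real.mul_rpow (by norm_num) ha0.le, Real.mul_rpow (by norm_num) ha0.le]
    have h2 : (2:ℝ) ^ (-α) * (2:ℝ) ^ (-β) = (2:ℝ) ^ (-(α+β)) := by
      rw [← Real.rpow_add (by norm_num : (0:ℝ) < 2)]; ring_nf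
    have haexp : a * (a * (a ^ (-α) * a ^ (-β))) = a ^ (2 - (α+β)) := by
      nth_rewrite 1 [← Real.rpow_one a]
      nth_rewrite 2 [← Real.rpow_one a]
      rw [← Real.rpow_add ha0, ← Real.rpow_add ha0, ← Real.rpow_add ha0]
      congr 1; ring
    have hnexp : a ^ (2 - (α+β)) * n ^ (-δ) = n ^ ((-1-μ)*(2-(α+β)) - δ) := by
      rw [ha, ← Real.rpow_mul hn0.le, ← Real.rpow_add hn0]
      congr 1
    calc a * (a * (2 ^ (-α) * a ^ (-α) * (2 ^ (-β) * a ^ (-β)) * n ^ (-δ)))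
        = (2 ^ (-α) * 2 ^ (-β)) * (a * (a * (a ^ (-α) * a ^ (-β))) * n ^ (-δ)) := by ring
      _ = 2 ^ (-(α+β)) * (a ^ (2 - (α+β)) * n ^ (-δ)) := by rw [h2, haexp]
      _ = 2 ^ (-(α+β)) * n ^ ((-1-μ)*(2-(α+β)) - δ) := by rw [hnexp]
  rw [← halg]
  exact houter

/-- The quantity `ψ⁻(μ)` for the interpolation kernel with long-range profile in
the regime `γ' > 1/δ`, `δ(γ+γ') > 2`: with mark cutoff `n^(-1-μ)`, one has
`-log I_μ(n)/log n → δ - (1+μ)(δ(γ+γ') - 2)` for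
`I_μ(n) = ∫∫_{[n^(-1-μ),1]²} min(1, (s∧t)^(-γδ)(s∨t)^(-γ'δ) n^(-δ)) ds dt`. -/
theorem psi_minus_large_gamma' (δ γ γ' μ : ℝ) (hδ : 0 < δ)
    (hγ0 : 0 ≤ γ) (hγ' : 1 / δ < γ') (hμ : 0 < μ)
    (hsum_lower : 2 < δ * (γ + γ')) (hsum : (1 + μ) * (γ + γ') < 1) :
    Tendsto (fun n : ℝ =>
      -Real.log (∫ s in Set.Icc (n ^ (-1 - μ)) 1, ∫ t in Set.Icc (n ^ (-1 - μ)) 1,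
          min 1 ((min s t) ^ (-(γ * δ)) * (max s t) ^ (-(γ' * δ)) * n ^ (-δ)))
        / Real.log n) atTop (nhds (δ - (1 + μ) * (δ * (γ + γ') - 2))) := by
  have hβ1 : 1 < γ' * δ := by
    rw [div_lt_iff₀ hδ] at hγ'; linarith
  have hα0 : 0 ≤ γ * δ := mul_nonneg hγ0 hδ.le
  have hσ : 2 < γ * δ + γ' * δ := by nlinarith [hsum_lower]
  obtain ⟨p, q, hp, hq, hpq, hpt⟩ := exists_pq hα0 hβ1 hσ
  have hexp : (1 + μ) * (γ * δ + γ' * δ) ≤ δ := by nlinarith [hsum, hδ]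
  set L := δ - (1 + μ) * (δ * (γ + γ') - 2) with hL
  have hLe : (-1 - μ) * (2 - (γ * δ + γ' * δ)) - δ = -L := by rw [hL]; ring
  set C := 2 / ((p - 1) * (q - 1)) with hC
  have hCpos : 0 < C := by
    rw [hC]; exact div_pos two_pos (mul_pos (by linarith) (by linarith))
  set c := (2:ℝ) ^ (-(γ * δ + γ' * δ)) with hc
  have hcpos : 0 < c := Real.rpow_pos_of_pos two_pos _
  -- eventual conditions
  have hsmall : ∀ᶠ n : ℝ in atTop, 2 * n ^ (-1 - μ) ≤ 1 := by
    have ht : Tendsto (fun n : ℝ => n ^ (-1 - μ)) atTop (nhds 0) := by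
      have : (-1 - μ) = -(1 + μ) := by ring
      rw [this]
      exact tendsto_rpow_neg_atTop (by linarith)
    filter_upwards [ht.eventually_le_const (by norm_num : (0:ℝ) < 1/2)] with n hn
    linarith
  have hev : ∀ᶠ n : ℝ in atTop,
      (L - Real.log C / Real.log n ≤
        -Real.log (∫ s in Set.Icc (n ^ (-1 - μ)) 1, ∫ t in Set.Icc (n ^ (-1 - μ)) 1,
          min 1 ((min s t) ^ (-(γ * δ)) * (max s t) ^ (-(γ' * δ)) * n ^ (-δ)))
        / Real.log n) ∧
      (-Real.log (∫ s in Set.Icc (n ^ (-1 - μ)) 1, ∫ t in Set.Icc (n ^ (-1 - μ)) 1,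
          min 1 ((min s t) ^ (-(γ * δ)) * (max s t) ^ (-(γ' * δ)) * n ^ (-δ)))
        / Real.log n ≤ L - Real.log c / Real.log n) := by
    filter_upwards [eventually_gt_atTop 1, hsmall] with n hn1 hn2
    have hn0 : (0:ℝ) < n := lt_trans one_pos hn1
    have hlogn : 0 < Real.log n := Real.log_pos hn1
    set I := ∫ s in Set.Icc (n ^ (-1 - μ)) 1, ∫ t in Set.Icc (n ^ (-1 - μ)) 1,
      min 1 ((min s t) ^ (-(γ * δ)) * (max s t) ^ (-(γ' * δ)) * n ^ (-δ)) with hI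
    have hupper : I ≤ C * n ^ (-L) := by
      have h := upper_est (α := γ * δ) (β := γ' * δ) (δ := δ) hn1 hμ hp hq hpq hpt
      rw [hLe] at h
      exact h
    have hlower : c * n ^ (-L) ≤ I := by
      have h := lower_est (α := γ * δ) (β := γ' * δ) (δ := δ) hn1 hμ hα0
        (by linarith) hn2 hexp
      rw [hLe] at h
      exact h
    have hnL : 0 < n ^ (-L) := Real.rpow_pos_of_pos hn0 _
    have hI0 : 0 < I := lt_of_lt_of_le (mul_pos hcpos hnL) hlower
    have h1 : Real.log I ≤ Real.log C + (-L) * Real.log n := by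
      calc Real.log I ≤ Real.log (C * n ^ (-L)) := Real.log_le_log hI0 hupper
        _ = Real.log C + Real.log (n ^ (-L)) :=
            Real.log_mul hCpos.ne' hnL.ne'
        _ = Real.log C + (-L) * Real.log n := by rw [Real.log_rpow hn0]
    have h2 : Real.log c + (-L) * Real.log n ≤ Real.log I := by
      calc Real.log c + (-L) * Real.log n
          = Real.log (c * n ^ (-L)) := by
            rw [Real.log_mul hcpos.ne' hnL.ne', Real.log_rpow hn0]
        _ ≤ Real.log I := Real.log_le_log (mul_pos hcpos hnL) hlower
    constructor
    · have e : L - Real.log C / Real.log n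
          = (L * Real.log n - Real.log C) / Real.log n := by
        field_simp
      rw [e]
      apply div_le_div_of_nonneg_right ?_ hlogn.le
      linarith
    · have e : L - Real.log c / Real.log n
          = (L * Real.log n - Real.log c) / Real.log n := by
        field_simp
      rw [e]
      apply div_le_div_of_nonneg_right ?_ hlogn.le
      linarith
  have t1 : Tendsto (fun n : ℝ => L - Real.log C / Real.log n) atTop (nhds L) := by
    have : Tendsto (fun n : ℝ => Real.log C / Real.log n) atTop (nhds 0) :=
      Tendsto.div_atTop tendsto_const_nhds Real.tendsto_log_atTop
    simpa using tendsto_const_nhds.sub this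
  have t2 : Tendsto (fun n : ℝ => L - Real.log c / Real.log n) atTop (nhds L) := by
    have : Tendsto (fun n : ℝ => Real.log c / Real.log n) atTop (nhds 0) :=
      Tendsto.div_atTop tendsto_const_nhds Real.tendsto_log_atTop
    simpa using tendsto_const_nhds.sub this
  exact tendsto_of_tendsto_of_tendsto_of_le_of_le' t1 t2
    (hev.mono fun n h => h.1) (hev.mono fun n h => h.2)
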